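/- Let G be a subgroup of Sym(Ω), let x ∈ Sym(Ω), and let f_L, f_R : Stacks(O) → Stacks(O). Then (f_L, f_R) is a refiner for the right coset Gx if and only if (f_L, f_L) is a refiner for G and f_R = f_L^x. -/

import Mathlib

/-- A right action of a group `G` on a type `O`, written exponentially in the paper:
`act o g` is `o ^ g`. -/
structure RAct (G : Type*) [Group G] (O : Type*) where
  act : O → G → O
  act_one : ∀ o : O, act o 1 = o
  act_mul : ∀ (o : O) (g h : G), act o (g * h) = act (act o g) h

namespace RAct

variable {G : Type*} [Group G] {O : Type*}

/-- The induced entrywise right action on stacks (finite lists) with entries in `O`. -/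
def stack (a : RAct G O) : RAct G (List O) where
  act S g := S.map fun o => a.act o g
  act_one S := by
    have h : (fun o => a.act o 1) = id := funext fun o => a.act_one o
    simp [h]
  act_mul S g h := by
    try simp only []
    rw [List.map_map]
    refine List.map_congr_left fun o _ => ?_
    exact a.act_mul o g h

/-- The transporter set `Iso(x, y) = {g : x ^ g = y}`. -/
def iso {X : Type*} (b : RAct G X) (x y : X) : Set G := {g | b.act x g = y}

/-- A refiner for `U`: a pair of functions on stacks with
`U ∩ Iso(S, T) ⊆ Iso(f_L S, f_R T)` for all stacks `S`, `T`. -/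
def IsRefiner (a : RAct G O) (U : Set G) (fL fR : List O → List O) : Prop :=
  ∀ S T : List O, U ∩ a.stack.iso S T ⊆ a.stack.iso (fL S) (fR T)

/-- A perfect refiner for `U`: a refiner such that
`U ∩ Iso(S, T) = Iso(S ‖ f_L S, T ‖ f_R T)` whenever `|S| = |T|`. -/
def IsPerfectRefiner (a : RAct G O) (U : Set G) (fL fR : List O → List O) : Prop :=
  IsRefiner a U fL fR ∧
    ∀ S T : List O, S.length = T.length →
      U ∩ a.stack.iso S T = a.stack.iso (S ++ fL S) (T ++ fR T)

/-- The action of `x ∈ G` on functions on stacks: `f ^ x (S) = (f (S ^ x⁻¹)) ^ x`. -/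
def conj (a : RAct G O) (f : List O → List O) (x : G) : List O → List O :=
  fun S => a.stack.act (f (a.stack.act S x⁻¹)) x

/-- The combination `f ‖ g` of two functions on stacks: `(f ‖ g)(S) = f S ‖ g S`. -/
def comb (f g : List O → List O) : List O → List O := fun S => f S ++ g S

end RAct


lemma RAct.act_cancel {G : Type*} [Group G] {X : Type*} (b : RAct G X) (s t : X) (g : G) :
    b.act s g = t ↔ s = b.act t g⁻¹ := by
  constructor
  · rintro rfl; rw [← b.act_mul, mul_inv_cancel, b.act_one]
  · rintro rfl; rw [← b.act_mul, inv_mul_cancel, b.act_one]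

/-- `(f_L, f_R)` is a refiner for the right coset `G x` if and only if
`(f_L, f_L)` is a refiner for `G` and `f_R = f_L ^ x`. -/
theorem stmt2 {Ω : Type*} [Fintype Ω] [Nonempty Ω] {O : Type*}
    (a : RAct (Equiv.Perm Ω) O) (G : Subgroup (Equiv.Perm Ω)) (x : Equiv.Perm Ω)
    (fL fR : List O → List O) :
    a.IsRefiner {u : Equiv.Perm Ω | ∃ g ∈ G, u = g * x} fL fR ↔
      a.IsRefiner (G : Set (Equiv.Perm Ω)) fL fL ∧ fR = a.conj fL x := by
  constructor
  · intro h
    have hfR : ∀ S : List O, fR S = a.stack.act (fL (a.stack.act S x⁻¹)) x := by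
      intro S
      have := h (a.stack.act S x⁻¹) S ⟨⟨1, G.one_mem, (one_mul x).symm⟩, by
        show a.stack.act (a.stack.act S x⁻¹) (1 * x) = S
        rw [one_mul, ← a.stack.act_mul, inv_mul_cancel, a.stack.act_one]⟩
      exact this.symm
    refine ⟨?_, funext hfR⟩
    rintro S T u ⟨hg, hST⟩
    have h1 := h S (a.stack.act T x) ⟨⟨u, hg, rfl⟩, by
      show a.stack.act S (u * x) = _
      rw [a.stack.act_mul, show a.stack.act S u = T from hST]⟩
    have h2 : fR (a.stack.act T x) = a.stack.act (fL T) x := by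
      rw [hfR, ← a.stack.act_mul, mul_inv_cancel, a.stack.act_one]
    show a.stack.act (fL S) u = fL T
    have h3 : a.stack.act (fL S) (u * x) = a.stack.act (fL T) x := h1.trans h2
    rw [a.stack.act_mul] at h3
    rw [a.stack.act_cancel] at h3
    rw [← a.stack.act_mul, mul_inv_cancel, a.stack.act_one] at h3
    exact h3
  · rintro ⟨href, rfl⟩ S T u ⟨⟨g, hg, rfl⟩, hST⟩
    have hS : a.stack.act S g = a.stack.act T x⁻¹ := by
      have hST' : a.stack.act (a.stack.act S g) x = T := by
        rw [← a.stack.act_mul]; exact hST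
      rw [a.stack.act_cancel] at hST'
      exact hST'
    have := href S (a.stack.act T x⁻¹) ⟨hg, hS⟩
    show a.stack.act (fL S) (g * x) = a.stack.act (fL (a.stack.act T x⁻¹)) x
    rw [a.stack.act_mul, show a.stack.act (fL S) g = _ from this]
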